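/- Let X be a finite-dimensional strictly convex and smooth real Banach space of dimension n ≥ 2. A bounded linear operator T : X → X is left symmetric (T ⊥_B A implies A ⊥_B T for all A ∈ B(X)) if and only if T is the zero operator. -/

import Mathlib

def OpBJOrth {X : Type*} [NormedAddCommGroup X] [NormedSpace ℝ X]
    (T A : X →L[ℝ] X) : Prop :=
  ∀ lam : ℝ, ‖T + lam • A‖ ≥ ‖T‖

section Aux

variable {X : Type*} [NormedAddCommGroup X] [NormedSpace ℝ X]

/-- Norm attainment for continuous linear maps on a finite-dimensional space. -/
lemma exists_norm_attain [FiniteDimensional ℝ X] [Nontrivial X]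
    {Y : Type*} [NormedAddCommGroup Y] [NormedSpace ℝ Y] (S : X →L[ℝ] Y) :
    ∃ z : X, ‖z‖ = 1 ∧ ‖S z‖ = ‖S‖ := by
  obtain ⟨x0, hx0⟩ := exists_norm_eq X zero_le_one
  have hne : (Metric.sphere (0:X) 1).Nonempty :=
    ⟨x0, by simpa [mem_sphere_zero_iff_norm] using hx0⟩
  obtain ⟨z, hzmem, hmax⟩ := (isCompact_sphere (0:X) 1).exists_isMaxOn hne
    (S.continuous.norm.continuousOn)
  rw [mem_sphere_zero_iff_norm] at hzmem
  refine ⟨z, hzmem, le_antisymm (by simpa [hzmem] using S.le_opNorm z) ?_⟩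
  refine S.opNorm_le_bound (norm_nonneg _) fun w => ?_
  rcases eq_or_ne w 0 with rfl | hw
  · simp
  · have hwpos : (0:ℝ) < ‖w‖ := norm_pos_iff.mpr hw
    have hmem : ‖w‖⁻¹ • w ∈ Metric.sphere (0:X) 1 := by
      rw [mem_sphere_zero_iff_norm, norm_smul, norm_inv, norm_norm]
      field_simp
    have hle : ‖S (‖w‖⁻¹ • w)‖ ≤ ‖S z‖ := hmax hmem
    rw [map_smul, norm_smul, norm_inv, norm_norm] at hle
    have : ‖w‖⁻¹ * ‖S w‖ ≤ ‖S z‖ := hle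
    calc ‖S w‖ = ‖w‖ * (‖w‖⁻¹ * ‖S w‖) := by field_simp
    _ ≤ ‖w‖ * ‖S z‖ := mul_le_mul_of_nonneg_left this (le_of_lt hwpos)
    _ = ‖S z‖ * ‖w‖ := by ring

/-- A norm-one functional attains the value 1 at a unit vector. -/
lemma exists_dual_attain [FiniteDimensional ℝ X] [Nontrivial X]
    (η : X →L[ℝ] ℝ) (hη : ‖η‖ = 1) :
    ∃ p : X, ‖p‖ = 1 ∧ η p = 1 := by
  obtain ⟨z, hz, hSz⟩ := exists_norm_attain η
  have habs : |η z| = 1 := by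
    rw [← Real.norm_eq_abs, hSz, hη]
  rcases (abs_eq zero_le_one).1 habs with h1 | h1
  · exact ⟨z, hz, h1⟩
  · exact ⟨-z, by simpa using hz, by simp [h1]⟩

/-- In a strictly convex space, a norm-one functional attains its norm at
at most one pair of antipodal unit vectors. -/
lemma attain_unique [StrictConvexSpace ℝ X] {η : X →L[ℝ] ℝ} {p z : X}
    (hη : ‖η‖ = 1) (hp : ‖p‖ = 1) (hηp : η p = 1) (hz : ‖z‖ = 1) (habs : |η z| = 1) :
    z = p ∨ z = -p := by
  have key : ∀ w : X, ‖w‖ = 1 → η w = 1 → w = p := by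
    intro w hw hηw
    by_contra hne
    have hray : ¬ SameRay ℝ w p := by
      intro hray
      have h1 := hray.norm_smul_eq
      rw [hw, hp, one_smul, one_smul] at h1
      exact hne h1.symm
    have hlt : ‖w + p‖ < 2 := by
      have := norm_add_lt_of_not_sameRay hray
      rw [hw, hp] at this; linarith
    have h2 : η (w + p) = 2 := by rw [map_add, hηw, hηp]; norm_num
    have hge : (2:ℝ) ≤ ‖w + p‖ := by
      calc (2:ℝ) = η (w + p) := h2.symm
      _ ≤ ‖η (w + p)‖ := le_abs_self _
      _ ≤ ‖η‖ * ‖w + p‖ := η.le_opNorm _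
      _ = ‖w + p‖ := by rw [hη, one_mul]
    linarith
  rcases (abs_eq zero_le_one).1 habs with h1 | h1
  · exact Or.inl (key z hz h1)
  · have := key (-z) (by simpa using hz) (by simp [h1])
    right
    rw [← this]; simp

/-- Strict convexity: if `h u (v) = 0` with `h u` norming `u`, then
`‖s • u + t • v‖ > |s|` for `t ≠ 0`. -/
lemma norm_gt_of_perp [StrictConvexSpace ℝ X] {u v : X} {h : X →L[ℝ] ℝ}
    (hu : ‖u‖ = 1) (hv : v ≠ 0) (hh : ‖h‖ = 1) (hhu : h u = 1) (hhv : h v = 0)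
    {s t : ℝ} (ht : t ≠ 0) : |s| < ‖s • u + t • v‖ := by
  have htv : t • v ≠ 0 := smul_ne_zero ht hv
  rcases eq_or_ne s 0 with rfl | hs
  · have : (0:ℝ) < ‖t • v‖ := norm_pos_iff.mpr htv
    simpa using this
  · by_contra hle
    push_neg at hle
    have happ : h (s • u + t • v) = s := by
      simp [map_add, map_smul, hhu, hhv, smul_eq_mul]
    have hlow : |s| ≤ ‖s • u + t • v‖ := by
      calc |s| = ‖h (s • u + t • v)‖ := by rw [happ, Real.norm_eq_abs]
      _ ≤ ‖h‖ * ‖s • u + t • v‖ := h.le_opNorm _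
      _ = ‖s • u + t • v‖ := by rw [hh, one_mul]
    have heq : ‖s • u + t • v‖ = |s| := le_antisymm hle hlow
    have hnormsu : ‖s • u‖ = |s| := by rw [norm_smul, hu, Real.norm_eq_abs, mul_one]
    have hab : s • u ≠ s • u + t • v := by
      intro hcon
      have : t • v = 0 := by
        have := hcon.symm
        rwa [add_eq_left] at this
      exact htv this
    have hray : ¬ SameRay ℝ (s • u) (s • u + t • v) := by
      intro hray
      have h1 := hray.norm_smul_eq
      rw [hnormsu, heq] at h1
      have hs' : |s| ≠ 0 := abs_ne_zero.mpr hs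
      have := smul_right_injective X hs' h1
      exact hab this.symm
    have hlt := norm_add_lt_of_not_sameRay hray
    rw [hnormsu, heq] at hlt
    have happ2 : h (s • u + (s • u + t • v)) = 2 * s := by
      simp [map_add, map_smul, hhu, hhv, smul_eq_mul]; ring
    have hge2 : 2 * |s| ≤ ‖s • u + (s • u + t • v)‖ := by
      calc 2 * |s| = |2 * s| := by rw [abs_mul]; norm_num
      _ = ‖h (s • u + (s • u + t • v))‖ := by rw [happ2, Real.norm_eq_abs]
      _ ≤ ‖h‖ * ‖s • u + (s • u + t • v)‖ := h.le_opNorm _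
      _ = ‖s • u + (s • u + t • v)‖ := by rw [hh, one_mul]
    linarith

/-- The key compactness lemma: if `A ⊥_B B` then there is a norming point `z` of `A`
and a norming functional `h` of `A z` with `h (B z) ≤ 0`. -/
lemma hard_lemma [FiniteDimensional ℝ X] [Nontrivial X] {A B : X →L[ℝ] X}
    (hA : A ≠ 0) (horth : OpBJOrth A B) :
    ∃ (z : X) (h : X →L[ℝ] ℝ), ‖z‖ = 1 ∧ ‖A z‖ = ‖A‖ ∧ ‖h‖ = 1 ∧
      h (A z) = ‖A‖ ∧ h (B z) ≤ 0 := by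
  classical
  have hApos : (0:ℝ) < ‖A‖ := norm_pos_iff.mpr hA
  obtain ⟨lam, hlameq⟩ : ∃ lam : ℕ → ℝ, ∀ n : ℕ, lam n = -(1/(n+1)) := ⟨_, fun _ => rfl⟩
  have hlamneg : ∀ n : ℕ, lam n < 0 := by
    intro n
    have : (0:ℝ) < 1/(n+1) := by positivity
    rw [hlameq n]; linarith
  have hAn : ∀ n : ℕ, ∃ z : X, ‖z‖ = 1 ∧ ‖(A + lam n • B) z‖ = ‖A + lam n • B‖ :=
    fun n => exists_norm_attain _
  choose zs hzs1 hzs2 using hAn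
  have hlb : ∀ n, ‖A‖ ≤ ‖A + lam n • B‖ := fun n => horth (lam n)
  have hwne : ∀ n, (A + lam n • B) (zs n) ≠ 0 := by
    intro n hcon
    have := hlb n
    rw [← hzs2 n, hcon, norm_zero] at this
    linarith
  have hEx : ∀ n, ∃ h : X →L[ℝ] ℝ, ‖h‖ = 1 ∧
      h ((A + lam n • B) (zs n)) = ‖(A + lam n • B) (zs n)‖ := by
    intro n
    obtain ⟨g, hg1, hg2⟩ := exists_dual_vector ℝ _ (norm_ne_zero_iff.mpr (hwne n))
    exact ⟨g, hg1, by exact_mod_cast hg2⟩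
  choose hs hhs1 hhs2 using hEx
  have happ : ∀ n, (A + lam n • B) (zs n) = A (zs n) + lam n • B (zs n) := by
    intro n; simp
  have hTbd : ∀ n, |hs n (B (zs n))| ≤ ‖B‖ := by
    intro n
    calc |hs n (B (zs n))| = ‖hs n (B (zs n))‖ := (Real.norm_eq_abs _).symm
    _ ≤ ‖hs n‖ * ‖B (zs n)‖ := (hs n).le_opNorm _
    _ = ‖B (zs n)‖ := by rw [hhs1 n, one_mul]
    _ ≤ ‖B‖ * ‖zs n‖ := B.le_opNorm _
    _ = ‖B‖ := by rw [hzs1 n, mul_one]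
  have hAzbd : ∀ n, hs n (A (zs n)) ≤ ‖A‖ := by
    intro n
    calc hs n (A (zs n)) ≤ ‖hs n (A (zs n))‖ := le_abs_self _
    _ ≤ ‖hs n‖ * ‖A (zs n)‖ := (hs n).le_opNorm _
    _ = ‖A (zs n)‖ := by rw [hhs1 n, one_mul]
    _ ≤ ‖A‖ * ‖zs n‖ := A.le_opNorm _
    _ = ‖A‖ := by rw [hzs1 n, mul_one]
  have hiden : ∀ n, hs n (A (zs n)) = ‖A + lam n • B‖ - lam n * hs n (B (zs n)) := by
    intro n
    have h1 : hs n (A (zs n) + lam n • B (zs n)) = ‖(A + lam n • B) (zs n)‖ := by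
      rw [← happ n]; exact hhs2 n
    rw [map_add, map_smul, smul_eq_mul, hzs2 n] at h1
    linarith
  have key1 : ∀ n, hs n (B (zs n)) ≤ 0 := by
    intro n
    have h1 := hiden n
    have h2 := hAzbd n
    have h3 := hlb n
    have hl := hlamneg n
    have h9 : 0 ≤ lam n * hs n (B (zs n)) := by linarith
    by_contra hpos
    push_neg at hpos
    have := mul_neg_of_neg_of_pos hl hpos
    linarith
  have key2 : ∀ n, ‖A‖ - ‖B‖ * (1/(n+1)) ≤ hs n (A (zs n)) := by
    intro n
    have h1 := hiden n
    have h3 := hlb n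
    have h4 := hTbd n
    have h5 : |lam n| = 1/(n+1) := by
      rw [hlameq n, abs_neg]
      exact abs_of_pos (by positivity)
    have h6 : |lam n * hs n (B (zs n))| ≤ (1/(n+1)) * ‖B‖ := by
      rw [abs_mul, h5]
      exact mul_le_mul_of_nonneg_left h4 (by positivity)
    have h8 : lam n * hs n (B (zs n)) ≤ ‖B‖ * (1/(n+1)) := by
      have := le_abs_self (lam n * hs n (B (zs n)))
      rw [mul_comm (1/((n:ℝ)+1)) ‖B‖] at h6
      linarith
    linarith
  -- compactness extraction
  obtain ⟨z, hzmem, φ, hφ, hzt⟩ := (isCompact_sphere (0:X) 1).tendsto_subseq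
    (fun n => (mem_sphere_zero_iff_norm).2 (hzs1 n))
  obtain ⟨h, hhmem, θ, hθ, hht⟩ := (isCompact_sphere (0:(X →L[ℝ] ℝ)) 1).tendsto_subseq
    (fun k => (mem_sphere_zero_iff_norm).2 (hhs1 (φ k)))
  rw [mem_sphere_zero_iff_norm] at hzmem hhmem
  set ζ : ℕ → ℕ := φ ∘ θ with hζdef
  have hζmono : StrictMono ζ := hφ.comp hθ
  have hζtop : Filter.Tendsto ζ Filter.atTop Filter.atTop := hζmono.tendsto_atTop
  have hz2 : Filter.Tendsto (fun k => zs (ζ k)) Filter.atTop (nhds z) := by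
    have : (fun k => zs (ζ k)) = (fun n => zs (φ n)) ∘ θ := rfl
    rw [this]
    exact hzt.comp hθ.tendsto_atTop
  have hh2 : Filter.Tendsto (fun k => hs (ζ k)) Filter.atTop (nhds h) := hht
  have evalcont : Continuous fun p : (X →L[ℝ] ℝ) × X => p.1 p.2 :=
    isBoundedBilinearMap_apply.continuous
  have evalB : Filter.Tendsto (fun k => hs (ζ k) (B (zs (ζ k)))) Filter.atTop
      (nhds (h (B z))) := by
    have hBz : Filter.Tendsto (fun k => B (zs (ζ k))) Filter.atTop (nhds (B z)) :=
      (B.continuous.tendsto z).comp hz2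
    exact (evalcont.tendsto (h, B z)).comp (hh2.prodMk_nhds hBz)
  have evalA : Filter.Tendsto (fun k => hs (ζ k) (A (zs (ζ k)))) Filter.atTop
      (nhds (h (A z))) := by
    have hAz : Filter.Tendsto (fun k => A (zs (ζ k))) Filter.atTop (nhds (A z)) :=
      (A.continuous.tendsto z).comp hz2
    exact (evalcont.tendsto (h, A z)).comp (hh2.prodMk_nhds hAz)
  have hhBz : h (B z) ≤ 0 :=
    le_of_tendsto evalB (Filter.Eventually.of_forall fun k => key1 (ζ k))
  have hlim0 : Filter.Tendsto (fun k => ‖A‖ - ‖B‖ * (1/((ζ k)+1))) Filter.atTop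
      (nhds ‖A‖) := by
    have h1 : Filter.Tendsto (fun n : ℕ => (1:ℝ)/(n+1)) Filter.atTop (nhds 0) :=
      tendsto_one_div_add_atTop_nhds_zero_nat
    have h2 : Filter.Tendsto (fun k => (1:ℝ)/((ζ k)+1)) Filter.atTop (nhds 0) :=
      h1.comp hζtop
    have h3 : Filter.Tendsto (fun k => ‖B‖ * ((1:ℝ)/((ζ k)+1))) Filter.atTop (nhds 0) := by
      simpa using h2.const_mul ‖B‖
    simpa using (tendsto_const_nhds (x := ‖A‖)).sub h3
  have hhAz_ge : ‖A‖ ≤ h (A z) :=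
    le_of_tendsto_of_tendsto' hlim0 evalA (fun k => key2 (ζ k))
  have hhAz_le : h (A z) ≤ ‖A z‖ := by
    calc h (A z) ≤ ‖h (A z)‖ := le_abs_self _
    _ ≤ ‖h‖ * ‖A z‖ := h.le_opNorm _
    _ = ‖A z‖ := by rw [hhmem, one_mul]
  have hAz_le : ‖A z‖ ≤ ‖A‖ := by
    calc ‖A z‖ ≤ ‖A‖ * ‖z‖ := A.le_opNorm _
    _ = ‖A‖ := by rw [hzmem, mul_one]
  have hAzeq : ‖A z‖ = ‖A‖ := le_antisymm hAz_le (le_trans hhAz_ge hhAz_le)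
  exact ⟨z, h, hzmem, hAzeq, hhmem, le_antisymm (hAzeq ▸ hhAz_le) hhAz_ge, hhBz⟩

/-- For a proper subspace there is a norm-one functional vanishing on it. -/
lemma exists_unit_functional_vanishing [FiniteDimensional ℝ X]
    (U : Submodule ℝ X) (hU : U ≠ ⊤) :
    ∃ η : X →L[ℝ] ℝ, ‖η‖ = 1 ∧ ∀ w ∈ U, η w = 0 := by
  obtain ⟨U', hcompl⟩ := Submodule.exists_isCompl U
  have hU' : U' ≠ ⊥ := by
    rintro rfl
    apply hU
    have := codisjoint_iff.mp hcompl.codisjoint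
    simpa using this
  obtain ⟨w, hwU', hw0⟩ := Submodule.exists_mem_ne_zero_of_ne_bot hU'
  obtain ⟨hw, hhw1, hhw2⟩ := exists_dual_vector ℝ w (norm_ne_zero_iff.mpr hw0)
  have hhw2' : hw w = ‖w‖ := by exact_mod_cast hhw2
  let π : X →ₗ[ℝ] U' := U'.linearProjOfIsCompl U hcompl.symm
  let ξl : X →ₗ[ℝ] ℝ := hw.toLinearMap ∘ₗ (U'.subtype ∘ₗ π)
  let ξ : X →L[ℝ] ℝ := LinearMap.toContinuousLinearMap ξl
  have hξw : ξ w = ‖w‖ := by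
    have hπ : π w = ⟨w, hwU'⟩ := Submodule.linearProjOfIsCompl_apply_left hcompl.symm ⟨w, hwU'⟩
    show ξl w = ‖w‖
    simp only [ξl, LinearMap.comp_apply, hπ, Submodule.subtype_apply]
    exact hhw2'
  have hξ0 : ∀ v ∈ U, ξ v = 0 := by
    intro v hv
    have hπ : π v = 0 := Submodule.linearProjOfIsCompl_apply_right hcompl.symm ⟨v, hv⟩
    show ξl v = 0
    simp [ξl, hπ]
  have hwnorm : (0:ℝ) < ‖w‖ := norm_pos_iff.mpr hw0
  have hξne : ξ ≠ 0 := by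
    intro hcon
    have h9 := hξw
    rw [hcon] at h9
    simp at h9
    linarith
  have hξnorm : (0:ℝ) < ‖ξ‖ := norm_pos_iff.mpr hξne
  refine ⟨‖ξ‖⁻¹ • ξ, ?_, fun v hv => by
    simp [ContinuousLinearMap.smul_apply, hξ0 v hv]⟩
  have hns := norm_smul (‖ξ‖⁻¹) ξ
  rw [hns, norm_inv, norm_norm]
  field_simp

end Aux

set_option maxHeartbeats 1600000 in
theorem left_symmetric_iff_zero {X : Type*} [NormedAddCommGroup X]
    [NormedSpace ℝ X] [StrictConvexSpace ℝ X] [FiniteDimensional ℝ X]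
    (hdim : 2 ≤ Module.finrank ℝ X)
    (hsmooth : ∀ x : X, x ≠ 0 → ∃! f : X →L[ℝ] ℝ, ‖f‖ = 1 ∧ f x = ‖x‖)
    (T : X →L[ℝ] X) :
    (∀ A : X →L[ℝ] X, OpBJOrth T A → OpBJOrth A T) ↔ T = 0 := by
  constructor
  · intro hls
    by_contra hT
    haveI hnontriv : Nontrivial X := Module.nontrivial_of_finrank_pos (R := ℝ) (by omega)
    have hμ : (0:ℝ) < ‖T‖ := norm_pos_iff.mpr hT
    obtain ⟨x, hx1, hxmax⟩ := exists_norm_attain T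
    set v := T x with hvdef
    have hvn : ‖v‖ = ‖T‖ := hxmax
    have hv0 : v ≠ 0 := by
      intro hcon
      rw [hcon, norm_zero] at hvn
      linarith
    obtain ⟨g, hg1, hg2'⟩ := exists_dual_vector ℝ v (norm_ne_zero_iff.mpr hv0)
    have hg2 : g v = ‖v‖ := by exact_mod_cast hg2'
    -- Step 1: T kills every norm-attainment point of a unit functional vanishing at x.
    have step1 : ∀ (η : X →L[ℝ] ℝ), ‖η‖ = 1 → η x = 0 →
        ∀ p : X, ‖p‖ = 1 → η p = 1 → T p = 0 := by
      intro η hη1 hηx p hp1 hηp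
      by_contra hTp
      set A := η.smulRight (T p) with hAdef
      have hAapp : ∀ z, A z = η z • T p := fun z => rfl
      have hTA : OpBJOrth T A := by
        intro lam
        have h1 : (T + lam • A) x = v := by
          simp [ContinuousLinearMap.add_apply, ContinuousLinearMap.smul_apply, hAapp, hηx,
            hvdef]
        have : ‖T‖ ≤ ‖T + lam • A‖ := by
          calc ‖T‖ = ‖v‖ := hvn.symm
          _ = ‖(T + lam • A) x‖ := by rw [h1]
          _ ≤ ‖T + lam • A‖ * ‖x‖ := (T + lam • A).le_opNorm x
          _ = ‖T + lam • A‖ := by rw [hx1, mul_one]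
        exact this
      have hAT := hls A hTA
      have hAne : A ≠ 0 := by
        intro hcon
        apply hTp
        have : A p = 0 := by rw [hcon]; rfl
        rwa [hAapp, hηp, one_smul] at this
      obtain ⟨z, h, hz1, hzA, hh1, hhA, hhT⟩ := hard_lemma hAne hAT
      have hAnorm : ‖A‖ = ‖T p‖ := by
        rw [hAdef, ContinuousLinearMap.norm_smulRight_apply, hη1, one_mul]
      have hTppos : (0:ℝ) < ‖T p‖ := norm_pos_iff.mpr hTp
      have habs : |η z| = 1 := by
        have h2 : ‖A z‖ = |η z| * ‖T p‖ := by
          rw [hAapp, norm_smul, Real.norm_eq_abs]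
        rw [hzA, hAnorm] at h2
        have h3 : |η z| * ‖T p‖ = 1 * ‖T p‖ := by rw [one_mul]; linarith
        exact mul_right_cancel₀ (ne_of_gt hTppos) h3
      have hzpm := attain_unique hη1 hp1 hηp hz1 habs
      have hAzTz : A z = T z := by
        rcases hzpm with rfl | rfl
        · rw [hAapp, hηp, one_smul]
        · rw [hAapp]
          simp [hηp]
      rw [← hAzTz, hhA, hAnorm] at hhT
      linarith
    -- Step 2: ker T together with x spans X.
    have hU : LinearMap.ker (T : X →ₗ[ℝ] X) ⊔ Submodule.span ℝ {x} = ⊤ := by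
      by_contra hne
      obtain ⟨η, hη1, hη0⟩ := exists_unit_functional_vanishing _ hne
      obtain ⟨p, hp1, hηp⟩ := exists_dual_attain η hη1
      have hηx : η x = 0 :=
        hη0 x (Submodule.mem_sup_right (Submodule.mem_span_singleton_self x))
      have hTp := step1 η hη1 hηx p hp1 hηp
      have hp0 : η p = 0 := hη0 p (Submodule.mem_sup_left (LinearMap.mem_ker.mpr hTp))
      rw [hηp] at hp0
      norm_num at hp0
    have hrange : ∀ z : X, ∃ c : ℝ, T z = c • v := by
      intro z
      have hz : z ∈ LinearMap.ker (T : X →ₗ[ℝ] X) ⊔ Submodule.span ℝ {x} := hU ▸ Submodule.mem_top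
      rw [Submodule.mem_sup] at hz
      obtain ⟨k, hk, m, hm, rfl⟩ := hz
      obtain ⟨c, rfl⟩ := Submodule.mem_span_singleton.mp hm
      refine ⟨c, ?_⟩
      have hTk : T k = 0 := LinearMap.mem_ker.mp hk
      rw [map_add, hTk, map_smul, zero_add, hvdef]
    -- the functional f̃ with T = f̃ ⊗ v
    obtain ⟨ft, hftapp, hfx⟩ : ∃ ft : X →L[ℝ] ℝ, (∀ z : X, T z = ft z • v) ∧ ft x = 1 := by
      refine ⟨‖T‖⁻¹ • (g.comp T), fun z => ?_, ?_⟩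
      · obtain ⟨c, hc⟩ := hrange z
        have h1 : (‖T‖⁻¹ • (g.comp T)) z = c := by
          rw [ContinuousLinearMap.smul_apply, ContinuousLinearMap.comp_apply, hc, map_smul,
            smul_eq_mul, hg2, hvn, smul_eq_mul]
          field_simp
        rw [h1, hc]
      · rw [ContinuousLinearMap.smul_apply, ContinuousLinearMap.comp_apply, ← hvdef, hg2, hvn,
          smul_eq_mul]
        field_simp
    have hTfact : T = ft.smulRight v := by
      ext z
      rw [ContinuousLinearMap.smulRight_apply, hftapp z]
    have hftnorm : ‖ft‖ = 1 := by
      have h1 : ‖T‖ = ‖ft‖ * ‖v‖ := by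
        rw [hTfact]; exact ContinuousLinearMap.norm_smulRight_apply ft v
      rw [hvn] at h1
      have h2 : ‖ft‖ * ‖T‖ = 1 * ‖T‖ := by rw [one_mul]; linarith
      exact mul_right_cancel₀ (ne_of_gt hμ) h2
    -- ψ and q
    have hx0 : x ≠ 0 := by
      intro hcon; rw [hcon, norm_zero] at hx1; norm_num at hx1
    have hspanx : Submodule.span ℝ {x} ≠ ⊤ := by
      intro hcon
      have h1 : Module.finrank ℝ ↥(Submodule.span ℝ {x}) = 1 := finrank_span_singleton hx0
      rw [hcon, finrank_top] at h1
      omega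
    obtain ⟨ψ, hψ1, hψ0⟩ := exists_unit_functional_vanishing _ hspanx
    have hψx : ψ x = 0 := hψ0 x (Submodule.mem_span_singleton_self x)
    obtain ⟨q, hq1, hψq⟩ := exists_dual_attain ψ hψ1
    have hTq : T q = 0 := step1 ψ hψ1 hψx q hq1 hψq
    have hfq : ft q = 0 := by
      have h1 := hftapp q
      rw [hTq] at h1
      rcases smul_eq_zero.mp h1.symm with h2 | h2
      · exact h2
      · exact absurd h2 hv0
    -- unit vector u in ker g
    have hker : ∃ u : X, ‖u‖ = 1 ∧ g u = 0 := by
      have hkerne : LinearMap.ker (g.toLinearMap) ≠ ⊥ := by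
        intro hbot
        have h1 := LinearMap.finrank_range_add_finrank_ker (g.toLinearMap)
        rw [hbot, finrank_bot, add_zero] at h1
        have h2 : Module.finrank ℝ (LinearMap.range g.toLinearMap) ≤ Module.finrank ℝ ℝ :=
          Submodule.finrank_le _
        rw [Module.finrank_self] at h2
        omega
      obtain ⟨u0, hu0mem, hu00⟩ := Submodule.exists_mem_ne_zero_of_ne_bot hkerne
      have hu0pos : (0:ℝ) < ‖u0‖ := norm_pos_iff.mpr hu00
      refine ⟨‖u0‖⁻¹ • u0, ?_, ?_⟩
      · rw [norm_smul, norm_inv, norm_norm]; field_simp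
      · have : g u0 = 0 := hu0mem
        rw [map_smul, this, smul_eq_mul, mul_zero]
    obtain ⟨u, hu1, hgu⟩ := hker
    have hu0 : u ≠ 0 := by
      intro hcon; rw [hcon, norm_zero] at hu1; norm_num at hu1
    -- the operator B = ft ⊗ u and its consequences via smoothness
    set B := ft.smulRight u with hBdef
    have hTB : OpBJOrth T B := by
      intro lam
      have hrw : T + lam • B = ft.smulRight (v + lam • u) := by
        ext z
        simp only [ContinuousLinearMap.add_apply, ContinuousLinearMap.smul_apply,
          ContinuousLinearMap.smulRight_apply, hBdef]
        rw [hftapp z, smul_add]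
        rw [smul_comm lam (ft z) u]
      have h1 : ‖T‖ ≤ ‖v + lam • u‖ := by
        calc ‖T‖ = g v := by rw [hg2, hvn]
        _ = g (v + lam • u) := by rw [map_add, map_smul, hgu, smul_eq_mul, mul_zero, add_zero]
        _ ≤ ‖g (v + lam • u)‖ := le_abs_self _
        _ ≤ ‖g‖ * ‖v + lam • u‖ := g.le_opNorm _
        _ = ‖v + lam • u‖ := by rw [hg1, one_mul]
      have h2 : ‖T + lam • B‖ = ‖v + lam • u‖ := by
        rw [hrw, ContinuousLinearMap.norm_smulRight_apply, hftnorm, one_mul]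
      rw [h2]
      exact h1
    have hBT := hls B hTB
    have hBne : B ≠ 0 := by
      intro hcon
      apply hu0
      have : B x = 0 := by rw [hcon]; rfl
      rwa [hBdef, ContinuousLinearMap.smulRight_apply, hfx, one_smul] at this
    have hBTneg : OpBJOrth B (-T) := by
      intro lam
      have : B + lam • (-T) = B + (-lam) • T := by
        rw [smul_neg, neg_smul]
      rw [this]
      exact hBT (-lam)
    have hBnorm : ‖B‖ = 1 := by
      rw [hBdef, ContinuousLinearMap.norm_smulRight_apply, hftnorm, hu1, mul_one]
    have extract : ∀ (S : X →L[ℝ] X) (z : X) (h : X →L[ℝ] ℝ), ‖z‖ = 1 → ‖B z‖ = ‖B‖ →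
        ‖h‖ = 1 → h (B z) = ‖B‖ → h (S z) ≤ 0 →
        ∃ hm : X →L[ℝ] ℝ, ‖hm‖ = 1 ∧ hm u = 1 ∧ hm (S x) ≤ 0 := by
      intro S z h hz hzB hh hhB hhS
      have hBz : B z = ft z • u := by rw [hBdef]; rfl
      have habs : |ft z| = 1 := by
        have h2 : ‖B z‖ = |ft z| * ‖u‖ := by
          rw [hBz, norm_smul, Real.norm_eq_abs]
        rw [hzB, hBnorm, hu1, mul_one] at h2
        exact h2.symm
      have hzpm := attain_unique hftnorm hx1 hfx hz habs
      rcases hzpm with rfl | rfl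
      · refine ⟨h, hh, ?_, hhS⟩
        have : h (B z) = h u := by rw [hBz, hfx, one_smul]
        rw [← this, hhB, hBnorm]
      · refine ⟨-h, by simpa using hh, ?_, ?_⟩
        · have h3 : B (-x) = -u := by
            rw [hBz]
            simp [hfx]
          have : h (-u) = 1 := by rw [← h3, hhB, hBnorm]
          simpa using this
        · have h4 : S (-x) = -(S x) := by simp
          rw [h4] at hhS
          simpa using hhS
    obtain ⟨z1, h1, hz11, hz1B, hh11, hh1B, hh1T⟩ := hard_lemma hBne hBT
    obtain ⟨z2, h2, hz21, hz2B, hh21, hh2B, hh2T⟩ := hard_lemma hBne hBTneg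
    obtain ⟨hm, hm1, hmu, hmv⟩ := extract T z1 h1 hz11 hz1B hh11 hh1B hh1T
    obtain ⟨hp, hp1, hpu, hpv'⟩ := extract (-T) z2 h2 hz21 hz2B hh21 hh2B hh2T
    have hpv : 0 ≤ hp v := by
      have : hp (-(T x)) ≤ 0 := by simpa using hpv'
      rw [map_neg] at this
      rw [hvdef]
      linarith
    obtain ⟨fu, hfuspec, hfuuniq⟩ := hsmooth u hu0
    have hmeq : hm = hp := by
      rw [hfuuniq hm ⟨hm1, by rw [hmu, hu1]⟩, hfuuniq hp ⟨hp1, by rw [hpu, hu1]⟩]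
    have hmv0 : hm v = 0 := by
      have : hm (T x) ≤ 0 := hmv
      rw [← hvdef] at this
      have h5 : 0 ≤ hm v := hmeq ▸ hpv
      linarith
    -- geometric gap δ via strict convexity
    have hxq : x ≠ q := by
      intro hcon
      rw [hcon, hψq] at hψx
      norm_num at hψx
    have hxqray : ¬ SameRay ℝ x q := by
      intro hray
      have h3 := hray.norm_smul_eq
      rw [hx1, hq1, one_smul, one_smul] at h3
      exact hxq h3.symm
    have hsumlt : ‖x + q‖ < 2 := by
      have := norm_add_lt_of_not_sameRay hxqray
      rw [hx1, hq1] at this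
      linarith
    set φf : ℝ → ℝ := fun β => ‖(2⁻¹ : ℝ) • x + β • q‖ with hφfdef
    have hφc : Continuous φf := by
      apply Continuous.norm
      exact continuous_const.add (continuous_id.smul continuous_const)
    have hφhalf : φf 2⁻¹ < 1 := by
      have h3 : (2⁻¹ : ℝ) • x + (2⁻¹:ℝ) • q = (2⁻¹:ℝ) • (x + q) := by
        rw [smul_add]
      show ‖(2⁻¹ : ℝ) • x + (2⁻¹:ℝ) • q‖ < 1
      have hh : ‖(2⁻¹:ℝ)‖ = 2⁻¹ := by
        rw [Real.norm_eq_abs, abs_of_pos]; norm_num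
      rw [h3, norm_smul, hh]
      linarith
    have hφ3 : 1 ≤ φf 3 := by
      have h3 : ‖(3:ℝ) • q‖ ≤ φf 3 + ‖(2⁻¹:ℝ) • x‖ := by
        have h4 : (3:ℝ) • q = ((2⁻¹:ℝ) • x + (3:ℝ) • q) - (2⁻¹:ℝ) • x := by abel
        rw [h4]
        exact norm_sub_le _ _
      rw [norm_smul, norm_smul, hq1, hx1] at h3
      have hh1 : ‖(3:ℝ)‖ = 3 := by rw [Real.norm_eq_abs, abs_of_pos]; norm_num
      have hh2 : ‖(2⁻¹:ℝ)‖ = 2⁻¹ := by rw [Real.norm_eq_abs, abs_of_pos]; norm_num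
      rw [hh1, hh2, mul_one, mul_one] at h3
      linarith
    obtain ⟨β₀, hβ₀mem, hβ₀⟩ := intermediate_value_Icc (by norm_num : (2⁻¹:ℝ) ≤ 3)
      hφc.continuousOn ⟨le_of_lt hφhalf, hφ3⟩
    have hβ₀half : 2⁻¹ < β₀ := by
      rcases lt_or_eq_of_le hβ₀mem.1 with h3 | h3
      · exact h3
      · exfalso
        rw [← h3] at hβ₀
        linarith
    have hβ₀le3 : β₀ ≤ 3 := hβ₀mem.2
    set δ := β₀ - 2⁻¹ with hδdef
    have hδpos : (0:ℝ) < δ := by rw [hδdef]; linarith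
    set z₀ := (2⁻¹:ℝ) • x + β₀ • q with hz₀def
    have hz₀1 : ‖z₀‖ = 1 := hβ₀
    have hfz₀ : ft z₀ = 2⁻¹ := by
      rw [hz₀def, map_add, map_smul, map_smul, hfx, hfq, smul_eq_mul, smul_eq_mul]
      ring
    have hψz₀ : ψ z₀ = β₀ := by
      rw [hz₀def, map_add, map_smul, map_smul, hψx, hψq, smul_eq_mul, smul_eq_mul]
      ring
    -- the final test operator
    obtain ⟨r, hrpos, hrT⟩ : ∃ r : ℝ, 0 < r ∧ r * ‖T‖ = δ / 8 :=
      ⟨δ / (8 * ‖T‖), by positivity, by field_simp [ne_of_gt hμ]⟩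
    set A := ft.smulRight u + ψ.smulRight (u + r • v) with hAdef
    have hAapp : ∀ z, A z = (ft z + ψ z) • u + (r * ψ z) • v := by
      intro z
      show ft z • u + ψ z • (u + r • v) = (ft z + ψ z) • u + (r * ψ z) • v
      rw [smul_add, add_smul, smul_smul, mul_comm (ψ z) r]
      abel
    have hTA : OpBJOrth T A := by
      intro lam
      have hax : A x = u := by
        rw [hAapp, hfx, hψx]
        simp
      have h3 : (T + lam • A) x = v + lam • u := by
        simp only [ContinuousLinearMap.add_apply, ContinuousLinearMap.smul_apply, hax, hvdef]
      have h4 : ‖T‖ ≤ ‖v + lam • u‖ := by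
        calc ‖T‖ = g v := by rw [hg2, hvn]
        _ = g (v + lam • u) := by rw [map_add, map_smul, hgu, smul_eq_mul, mul_zero, add_zero]
        _ ≤ ‖g (v + lam • u)‖ := le_abs_self _
        _ ≤ ‖g‖ * ‖v + lam • u‖ := g.le_opNorm _
        _ = ‖v + lam • u‖ := by rw [hg1, one_mul]
      calc ‖T‖ ≤ ‖v + lam • u‖ := h4
      _ = ‖(T + lam • A) x‖ := by rw [h3]
      _ ≤ ‖T + lam • A‖ * ‖x‖ := (T + lam • A).le_opNorm x
      _ = ‖T + lam • A‖ := by rw [hx1, mul_one]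
    have hATorth := hls A hTA
    have hAne : A ≠ 0 := by
      intro hcon
      apply hu0
      have h3 : A x = 0 := by rw [hcon]; rfl
      rw [hAapp, hfx, hψx] at h3
      simpa using h3
    obtain ⟨zw, hw, hzw1, hzwA, hhw1, hhwA, hhwT⟩ := hard_lemma hAne hATorth
    -- WLOG ψ zw ≥ 0
    obtain ⟨z', h', hz'1, hz'A, hh'1, hh'A, hh'T, hψ'⟩ :
        ∃ (z' : X) (h' : X →L[ℝ] ℝ), ‖z'‖ = 1 ∧ ‖A z'‖ = ‖A‖ ∧ ‖h'‖ = 1 ∧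
          h' (A z') = ‖A‖ ∧ h' (T z') ≤ 0 ∧ 0 ≤ ψ z' := by
      rcases le_or_gt 0 (ψ zw) with hle | hlt
      · exact ⟨zw, hw, hzw1, hzwA, hhw1, hhwA, hhwT, hle⟩
      · refine ⟨-zw, -hw, by simpa using hzw1, by simpa using hzwA,
          by simpa using hhw1, ?_, ?_, ?_⟩
        · simp only [map_neg, ContinuousLinearMap.neg_apply, neg_neg]
          exact hhwA
        · simp only [map_neg, ContinuousLinearMap.neg_apply, neg_neg]
          exact hhwT
        · rw [map_neg]
          linarith
    set α := ft z' with hαdef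
    set β := ψ z' with hβdef
    have hαle : |α| ≤ 1 := by
      calc |α| = ‖ft z'‖ := (Real.norm_eq_abs _).symm
      _ ≤ ‖ft‖ * ‖z'‖ := ft.le_opNorm _
      _ = 1 := by rw [hftnorm, hz'1, mul_one]
    have hβle : β ≤ 1 := by
      calc β ≤ |β| := le_abs_self _
      _ = ‖ψ z'‖ := (Real.norm_eq_abs _).symm
      _ ≤ ‖ψ‖ * ‖z'‖ := ψ.le_opNorm _
      _ = 1 := by rw [hψ1, hz'1, mul_one]
    have hAz' : A z' = (α + β) • u + (r * β) • v := hAapp z'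
    have hupper : ‖A‖ ≤ 1 + r * ‖T‖ := by
      rcases eq_or_lt_of_le hψ' with hβ0 | hβpos
      · rw [← hz'A, hAz', ← hβ0]
        simp only [mul_zero, zero_smul, add_zero, zero_add]
        rw [norm_smul, hu1, mul_one, Real.norm_eq_abs]
        have : (0:ℝ) ≤ r * ‖T‖ := le_of_lt (mul_pos hrpos hμ)
        linarith
      · have htne : r * β ≠ 0 := by positivity
        have hgt := norm_gt_of_perp hu1 hv0 hm1 hmu hmv0 (s := α + β) (t := r * β) htne
        have hh'v : 0 < h' v := by
          have e1 : h' (A z') = (α + β) * h' u + (r * β) * h' v := by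
            rw [hAz', map_add, map_smul, map_smul, smul_eq_mul, smul_eq_mul]
          have e2 : (α + β) * h' u ≤ |α + β| := by
            have e3 : |h' u| ≤ 1 := by
              calc |h' u| = ‖h' u‖ := (Real.norm_eq_abs _).symm
              _ ≤ ‖h'‖ * ‖u‖ := h'.le_opNorm _
              _ = 1 := by rw [hh'1, hu1, mul_one]
            calc (α + β) * h' u ≤ |(α + β) * h' u| := le_abs_self _
            _ = |α + β| * |h' u| := abs_mul _ _
            _ ≤ |α + β| := mul_le_of_le_one_right (abs_nonneg _) e3
          have e4 : h' (A z') = ‖A z'‖ := by rw [hh'A, hz'A]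
          rw [← hAz'] at hgt
          have e5 : (r * β) * h' v > 0 := by linarith
          by_contra hnp
          push_neg at hnp
          have e6 : (r * β) * h' v ≤ 0 :=
            mul_nonpos_of_nonneg_of_nonpos (le_of_lt (mul_pos hrpos hβpos)) hnp
          linarith
        have hα0 : α ≤ 0 := by
          have e1 : h' (T z') = α * h' v := by
            rw [hftapp z', map_smul, smul_eq_mul, ← hαdef]
          by_contra hap
          push_neg at hap
          have := mul_pos hap hh'v
          linarith
        rw [← hz'A, hAz']
        have habsle : |α + β| ≤ 1 := by
          rw [abs_le]
          constructor
          · have := abs_le.mp hαle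
            linarith
          · linarith
        calc ‖(α + β) • u + (r * β) • v‖ ≤ ‖(α + β) • u‖ + ‖(r * β) • v‖ := norm_add_le _ _
        _ = |α + β| + |r * β| * ‖T‖ := by
            rw [norm_smul, norm_smul, hu1, mul_one, hvn, Real.norm_eq_abs, Real.norm_eq_abs]
        _ ≤ 1 + r * ‖T‖ := by
            have hrb : |r * β| ≤ r := by
              rw [abs_mul, abs_of_pos hrpos]
              have hb1 : |β| ≤ 1 := abs_le.mpr ⟨by linarith, hβle⟩
              exact mul_le_of_le_one_right (le_of_lt hrpos) hb1
            have hrb2 : |r * β| * ‖T‖ ≤ r * ‖T‖ :=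
              mul_le_mul_of_nonneg_right hrb (norm_nonneg T)
            linarith
    have hlower : 1 + δ - 3 * (r * ‖T‖) ≤ ‖A‖ := by
      have hAz₀ : A z₀ = (2⁻¹ + β₀) • u + (r * β₀) • v := by
        rw [hAapp, hfz₀, hψz₀]
      have h3 : (2⁻¹ + β₀) • u = A z₀ - (r * β₀) • v := by
        rw [hAz₀]; abel
      have h4 : ‖(2⁻¹ + β₀) • u‖ ≤ ‖A z₀‖ + ‖(r * β₀) • v‖ := by
        rw [h3]; exact norm_sub_le _ _
      have h5 : ‖(2⁻¹ + β₀) • u‖ = 2⁻¹ + β₀ := by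
        rw [norm_smul, hu1, mul_one, Real.norm_eq_abs, abs_of_pos (by linarith)]
      have h6 : ‖(r * β₀) • v‖ ≤ 3 * (r * ‖T‖) := by
        rw [norm_smul, hvn, Real.norm_eq_abs,
          abs_of_pos (mul_pos hrpos (by linarith : (0:ℝ) < β₀))]
        have hb : r * β₀ ≤ r * 3 := mul_le_mul_of_nonneg_left hβ₀le3 (le_of_lt hrpos)
        have hb2 : (r * β₀) * ‖T‖ ≤ (r * 3) * ‖T‖ :=
          mul_le_mul_of_nonneg_right hb (norm_nonneg T)
        calc (r * β₀) * ‖T‖ ≤ (r * 3) * ‖T‖ := hb2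
        _ = 3 * (r * ‖T‖) := by ring
      have h7 : ‖A z₀‖ ≤ ‖A‖ := by
        calc ‖A z₀‖ ≤ ‖A‖ * ‖z₀‖ := A.le_opNorm _
        _ = ‖A‖ := by rw [hz₀1, mul_one]
      have h8 : 1 + δ = 2⁻¹ + β₀ := by rw [hδdef]; ring
      linarith
    have hfinal : δ ≤ 4 * (r * ‖T‖) := by linarith
    rw [hrT] at hfinal
    linarith
  · rintro rfl
    intro A hA lam
    simp
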